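/- (Nuclear norm bound used in the convex relaxation.) Let r, d₁, d₂, P be positive integers and B₁, B₂ ≥ 0. Let w_1, …, w_r ∈ ℝ^{d₁} with ‖w_j‖₂ ≤ B₁ for each j, and for each k ∈ {1,…,d₂} and j ∈ {1,…,r} let α_{k,j} ∈ ℝ^P with ‖α_{k,j}‖₂ ≤ B₂. Define A_k = ∑_{j=1}^r w_j α_{k,j}ᵀ ∈ ℝ^{d₁ × P} and let A = (A_1, …, A_{d₂}) ∈ ℝ^{d₁ × P d₂} be their horizontal concatenation. Then A has rank at most r and its nuclear norm satisfies ‖A‖_* ≤ B₁ B₂ r √(d₂). -/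

import Mathlib

/-- The nuclear norm (sum of singular values) of a real rectangular matrix:
the trace of `(AᵀA)^{1/2}`. -/
noncomputable def nuclearNorm {m n : Type*} [Fintype m] [Fintype n] [DecidableEq n]
    (A : Matrix m n ℝ) : ℝ :=
  ((Matrix.posSemidef_conjTranspose_mul_self A).1.eigenvectorUnitary.1 *
    Matrix.diagonal (Real.sqrt ∘ (Matrix.posSemidef_conjTranspose_mul_self A).1.eigenvalues) *
    (star (Matrix.posSemidef_conjTranspose_mul_self A).1.eigenvectorUnitary : Matrix n n ℝ)).trace

open Matrix in
private lemma trace_sqrt_eq {n : Type*} [Fintype n] [DecidableEq n] {M : Matrix n n ℝ}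
    (hM : M.PosSemidef) : (hM.1.eigenvectorUnitary.1 * Matrix.diagonal (Real.sqrt ∘ hM.1.eigenvalues) *
      (star hM.1.eigenvectorUnitary : Matrix n n ℝ)).trace = ∑ i, Real.sqrt (hM.1.eigenvalues i) := by
  rw [Matrix.trace_mul_cycle, Unitary.coe_star_mul_self, one_mul, Matrix.trace_diagonal]
  simp [Function.comp]

open Matrix in
private lemma sum_sq_rows {n : Type*} [Fintype n] [DecidableEq n] (E : Matrix n n ℝ)
    (hrow : ∀ a b, ∑ i, E a i * E b i = if a = b then (1:ℝ) else 0) (v : n → ℝ) :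
    ∑ i, (∑ a, v a * E a i) ^ 2 = ∑ a, v a ^ 2 := by
  calc ∑ i, (∑ a, v a * E a i) ^ 2
      = ∑ i, ∑ a, ∑ b, (v a * v b) * (E a i * E b i) := by
        refine Finset.sum_congr rfl fun i _ => ?_
        rw [sq, Finset.sum_mul_sum]
        exact Finset.sum_congr rfl fun a _ => Finset.sum_congr rfl fun b _ => by ring
    _ = ∑ a, ∑ b, (v a * v b) * ∑ i, E a i * E b i := by
        rw [Finset.sum_comm]
        refine Finset.sum_congr rfl fun a _ => ?_
        rw [Finset.sum_comm]
        exact Finset.sum_congr rfl fun b _ => (Finset.mul_sum _ _ _).symm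
    _ = ∑ a, v a ^ 2 := by
        simp [hrow, sq, mul_ite]

open Matrix in
/-- Bessel-type inequality for a family of vectors whose Gram matrix is a 0/1 diagonal. -/
private lemma bessel_sum {ι m : Type*} [Fintype ι] [DecidableEq ι] [Fintype m]
    (x : ι → m → ℝ)
    (hxx : ∀ i j, ∑ a, x i a * x j a = if i = j then (if x i = 0 then 0 else 1) else 0)
    (u : m → ℝ) :
    ∑ i, (∑ a, u a * x i a) ^ 2 ≤ ∑ a, u a ^ 2 := by
  classical
  set s : Finset ι := Finset.univ.filter (fun i => x i ≠ 0) with hs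
  have hzero : ∀ i, x i = 0 → (∑ a, u a * x i a) ^ 2 = 0 := by
    intro i h; simp [h]
  have hstep : ∑ i, (∑ a, u a * x i a) ^ 2 = ∑ i ∈ s, (∑ a, u a * x i a) ^ 2 := by
    rw [hs]
    refine (Finset.sum_filter_of_ne ?_).symm
    intro i _ hne h0
    exact hne (hzero i h0)
  rw [hstep]
  -- use mathlib Bessel with EuclideanSpace
  set X : ι → EuclideanSpace ℝ m := fun i => (WithLp.equiv 2 (m → ℝ)).symm (x i) with hX
  set U : EuclideanSpace ℝ m := (WithLp.equiv 2 (m → ℝ)).symm u with hU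
  have horth : Orthonormal ℝ (fun i : {i // i ∈ s} => X i.1) := by
    rw [orthonormal_iff_ite]
    intro i j
    have hinner : (inner ℝ (X i.1) (X j.1) : ℝ) = ∑ a, x i.1 a * x j.1 a := by
      simp [hX, PiLp.inner_apply, RCLike.inner_apply, WithLp.equiv_symm_apply, PiLp.toLp_apply, mul_comm]
    rw [hinner, hxx]
    have hi : x i.1 ≠ 0 := (Finset.mem_filter.mp i.2).2
    by_cases hij : (i : ι) = (j : ι)
    · have hj : x j.1 ≠ 0 := (Finset.mem_filter.mp j.2).2
      simp [hij, Subtype.ext hij, hj]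
    · have hne : i ≠ j := fun h => hij (congrArg Subtype.val h)
      simp [hij, hne]
  have hb := horth.sum_inner_products_le (𝕜 := ℝ) U (s := Finset.univ)
  have hlhs : ∑ i : {i // i ∈ s}, ‖(inner ℝ (X i.1) U : ℝ)‖ ^ 2
      = ∑ i ∈ s, (∑ a, u a * x i a) ^ 2 := by
    rw [← Finset.sum_coe_sort s]
    refine Finset.sum_congr rfl fun i _ => ?_
    have : (inner ℝ (X i.1) U : ℝ) = ∑ a, u a * x i.1 a := by
      simp [hX, hU, PiLp.inner_apply, RCLike.inner_apply, WithLp.equiv_symm_apply, PiLp.toLp_apply, mul_comm]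
    rw [this, Real.norm_eq_abs, sq_abs]
  have hrhs : ‖U‖ ^ 2 = ∑ a, u a ^ 2 := by
    rw [EuclideanSpace.norm_eq, Real.sq_sqrt (by positivity)]
    simp [hU, WithLp.equiv_symm_apply, PiLp.toLp_apply, sq_abs]
  calc ∑ i ∈ s, (∑ a, u a * x i a) ^ 2
      = ∑ i : {i // i ∈ s}, ‖(inner ℝ (X i.1) U : ℝ)‖ ^ 2 := hlhs.symm
    _ ≤ ‖U‖ ^ 2 := hb
    _ = ∑ a, u a ^ 2 := hrhs

open Matrix in
private lemma nuclearNorm_factor_le {m n ρ : Type*} [Fintype m] [Fintype n]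
    [DecidableEq n] [Fintype ρ] (U : Matrix m ρ ℝ) (V : Matrix n ρ ℝ) :
    nuclearNorm (U * Vᵀ) ≤
      Real.sqrt (∑ a : m, ∑ j : ρ, U a j ^ 2) * Real.sqrt (∑ a : n, ∑ j : ρ, V a j ^ 2) := by
  classical
  set A : Matrix m n ℝ := U * Vᵀ with hAdef
  have hM : (Aᴴ * A).PosSemidef := Matrix.posSemidef_conjTranspose_mul_self A
  set lam : n → ℝ := hM.1.eigenvalues with hlamdef
  set E : Matrix n n ℝ := (hM.1.eigenvectorUnitary : Matrix n n ℝ) with hEdef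
  have hlam0 : ∀ i, 0 ≤ lam i := hM.eigenvalues_nonneg
  -- columns of E are orthonormal
  have hcol : ∀ i j, ∑ a, E a i * E a j = if i = j then (1:ℝ) else 0 := by
    intro i j
    have h := congrFun (congrFun (Unitary.coe_star_mul_self hM.1.eigenvectorUnitary) i) j
    simpa [Matrix.mul_apply, Matrix.one_apply, Matrix.conjTranspose_apply, hEdef] using h
  -- rows of E are orthonormal
  have hrow : ∀ a b, ∑ i, E a i * E b i = if a = b then (1:ℝ) else 0 := by
    intro a b
    have h := congrFun (congrFun (Unitary.coe_mul_star_self hM.1.eigenvectorUnitary) a) b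
    simpa [Matrix.mul_apply, Matrix.one_apply, Matrix.conjTranspose_apply, hEdef] using h
  -- eigenvalue equation
  have heig : ∀ i, (Aᴴ * A) *ᵥ (fun a => E a i) = lam i • (fun a => E a i) := by
    intro i
    have h1 : (fun a => E a i) = ⇑(hM.1.eigenvectorBasis i) := by
      funext a
      rw [hEdef]
      exact Matrix.IsHermitian.eigenvectorUnitary_apply hM.1 a i
    rw [h1]
    exact hM.1.mulVec_eigenvectorBasis i
  -- the vectors y i = A e i
  set y : n → m → ℝ := fun i => A *ᵥ (fun a => E a i) with hydef
  have hyy : ∀ i j, ∑ a, y i a * y j a = if i = j then lam j else 0 := by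
    intro i j
    have h1 : ∑ a, y i a * y j a = y i ⬝ᵥ (A *ᵥ fun a => E a j) := rfl
    rw [h1, Matrix.dotProduct_mulVec]
    have h2 : y i ᵥ* A = (Aᴴ * A) *ᵥ (fun a => E a i) := by
      rw [hydef]
      show (A *ᵥ fun a => E a i) ᵥ* A = _
      rw [← Matrix.mulVec_transpose, Matrix.mulVec_mulVec,
        ← Matrix.conjTranspose_eq_transpose_of_trivial]
    rw [h2, heig i]
    have : (lam i • fun a => E a i) ⬝ᵥ (fun a => E a j) = lam i * ∑ a, E a i * E a j := by
      simp [dotProduct, Finset.mul_sum, mul_assoc]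
    rw [this, hcol]
    by_cases hij : i = j <;> simp [hij]
  -- normalized left singular vectors
  set x : n → m → ℝ := fun i a => (Real.sqrt (lam i))⁻¹ * y i a with hxdef
  have hyzero : ∀ i, lam i = 0 → y i = 0 := by
    intro i h0
    have h1 : ∑ a, y i a * y i a = 0 := by rw [hyy i i]; simp [h0]
    funext a
    have := (Finset.sum_eq_zero_iff_of_nonneg (fun b _ => mul_self_nonneg (y i b))).mp h1 a
      (Finset.mem_univ a)
    exact mul_self_eq_zero.mp this
  have hxzero : ∀ i, lam i = 0 → x i = 0 := by
    intro i h0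
    funext a
    simp [hxdef, hyzero i h0]
  have hxx : ∀ i j, ∑ a, x i a * x j a = if i = j then (if x i = 0 then 0 else 1) else 0 := by
    intro i j
    have h1 : ∑ a, x i a * x j a
        = (Real.sqrt (lam i))⁻¹ * ((Real.sqrt (lam j))⁻¹ * ∑ a, y i a * y j a) := by
      rw [Finset.mul_sum, Finset.mul_sum]
      exact Finset.sum_congr rfl fun a _ => by rw [hxdef]; ring
    rw [h1, hyy]
    by_cases hij : i = j
    · subst hij
      by_cases h0 : lam i = 0
      · simp [h0, hxzero i h0]
      · have hs : Real.sqrt (lam i) ≠ 0 := by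
          simp only [ne_eq, Real.sqrt_eq_zero (hlam0 i)]
          exact h0
        have hx0 : x i ≠ 0 := by
          intro hc
          have hy0 : y i = 0 := by
            funext a
            have hca := congrFun hc a
            rw [hxdef] at hca
            simp only [Pi.zero_apply] at hca ⊢
            exact (mul_eq_zero.mp hca).resolve_left (inv_ne_zero hs)
          apply h0
          have h := hyy i i
          simp only [if_pos rfl, hy0, Pi.zero_apply, mul_zero, Finset.sum_const_zero] at h
          exact h.symm
        rw [if_pos rfl, if_pos rfl, if_neg hx0]
        rw [← mul_assoc, ← mul_inv, Real.mul_self_sqrt (hlam0 i), inv_mul_cancel₀ h0]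
    · simp [hij]
  -- f and g
  set f : n → ρ → ℝ := fun i j => ∑ a, U a j * x i a with hfdef
  set g : n → ρ → ℝ := fun i j => ∑ a, V a j * E a i with hgdef
  -- per-eigenvalue bound
  have hper : ∀ i, Real.sqrt (lam i) ≤ Real.sqrt ((∑ j, f i j ^ 2) * (∑ j, g i j ^ 2)) := by
    intro i
    by_cases h0 : lam i = 0
    · simp [h0, Real.sqrt_nonneg]
    · have hs : Real.sqrt (lam i) ≠ 0 := by
        simp [Real.sqrt_eq_zero (hlam0 i)]; exact h0
      have key : ∑ j, f i j * g i j = Real.sqrt (lam i) := by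
        have e1 : ∑ j, f i j * g i j = (Uᵀ *ᵥ x i) ⬝ᵥ (Vᵀ *ᵥ fun a => E a i) := by
          refine Finset.sum_congr rfl fun j _ => ?_
          simp [hfdef, hgdef, Matrix.mulVec, dotProduct, Matrix.transpose_apply]
        have e2 : (Uᵀ *ᵥ x i) ⬝ᵥ (Vᵀ *ᵥ fun a => E a i) = x i ⬝ᵥ (A *ᵥ fun a => E a i) := by
          rw [dotProduct_comm, Matrix.dotProduct_mulVec, Matrix.vecMul_transpose,
            Matrix.mulVec_mulVec, ← hAdef, dotProduct_comm]
        have e3 : x i ⬝ᵥ y i = (Real.sqrt (lam i))⁻¹ * ∑ a, y i a * y i a := by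
          simp [hxdef, dotProduct, Finset.mul_sum, mul_assoc]
        rw [e1, e2]
        show x i ⬝ᵥ y i = _
        rw [e3, hyy i i, if_pos rfl]
        rw [inv_mul_eq_div, Real.div_sqrt]
      rw [← key]
      calc ∑ j, f i j * g i j ≤ |∑ j, f i j * g i j| := le_abs_self _
        _ = Real.sqrt ((∑ j, f i j * g i j) ^ 2) := (Real.sqrt_sq_eq_abs _).symm
        _ ≤ Real.sqrt ((∑ j, f i j ^ 2) * (∑ j, g i j ^ 2)) :=
            Real.sqrt_le_sqrt (Finset.sum_mul_sq_le_sq_mul_sq _ _ _)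
  -- total g bound
  have hgsum : ∑ i, ∑ j, g i j ^ 2 = ∑ a, ∑ j, V a j ^ 2 := by
    have lhs : ∑ i : n, ∑ j : ρ, g i j ^ 2 = ∑ j : ρ, ∑ i : n, g i j ^ 2 := Finset.sum_comm
    have rhs : ∑ a : n, ∑ j : ρ, V a j ^ 2 = ∑ j : ρ, ∑ a : n, V a j ^ 2 := Finset.sum_comm
    rw [lhs, rhs]
    exact Finset.sum_congr rfl fun j _ => sum_sq_rows E hrow (fun a => V a j)
  -- total f bound (Bessel)
  have hfsum : ∑ i, ∑ j, f i j ^ 2 ≤ ∑ a, ∑ j, U a j ^ 2 := by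
    have lhs : ∑ i : n, ∑ j : ρ, f i j ^ 2 = ∑ j : ρ, ∑ i : n, f i j ^ 2 := Finset.sum_comm
    have rhs : ∑ a : m, ∑ j : ρ, U a j ^ 2 = ∑ j : ρ, ∑ a : m, U a j ^ 2 := Finset.sum_comm
    rw [lhs, rhs]
    exact Finset.sum_le_sum fun j _ => bessel_sum x hxx (fun a => U a j)
  -- assemble
  have htr : nuclearNorm A = ∑ i, Real.sqrt (lam i) := trace_sqrt_eq hM
  rw [hAdef] at htr ⊢
  rw [htr]
  have step1 : ∑ i, Real.sqrt (lam i)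
      ≤ ∑ i, Real.sqrt ((∑ j, f i j ^ 2) * (∑ j, g i j ^ 2)) :=
    Finset.sum_le_sum fun i _ => hper i
  have step2 : ∑ i, Real.sqrt ((∑ j, f i j ^ 2) * (∑ j, g i j ^ 2))
      ≤ Real.sqrt ((∑ i, ∑ j, f i j ^ 2) * (∑ i, ∑ j, g i j ^ 2)) := by
    have hsq := Finset.sum_sq_le_sum_mul_sum_of_sq_eq_mul Finset.univ
      (r := fun i => Real.sqrt ((∑ j, f i j ^ 2) * (∑ j, g i j ^ 2)))
      (f := fun i => ∑ j, f i j ^ 2) (g := fun i => ∑ j, g i j ^ 2)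
      (fun i _ => Finset.sum_nonneg fun j _ => sq_nonneg _)
      (fun i _ => Finset.sum_nonneg fun j _ => sq_nonneg _)
      (fun i _ => Real.sq_sqrt (mul_nonneg
        (Finset.sum_nonneg fun j _ => sq_nonneg _)
        (Finset.sum_nonneg fun j _ => sq_nonneg _)))
    have h0 : 0 ≤ ∑ i, Real.sqrt ((∑ j, f i j ^ 2) * (∑ j, g i j ^ 2)) :=
      Finset.sum_nonneg fun i _ => Real.sqrt_nonneg _
    calc ∑ i, Real.sqrt ((∑ j, f i j ^ 2) * (∑ j, g i j ^ 2))
        = Real.sqrt ((∑ i, Real.sqrt ((∑ j, f i j ^ 2) * (∑ j, g i j ^ 2))) ^ 2) :=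
          (Real.sqrt_sq h0).symm
      _ ≤ Real.sqrt ((∑ i, ∑ j, f i j ^ 2) * (∑ i, ∑ j, g i j ^ 2)) :=
          Real.sqrt_le_sqrt hsq
  have step3 : Real.sqrt ((∑ i, ∑ j, f i j ^ 2) * (∑ i, ∑ j, g i j ^ 2))
      ≤ Real.sqrt (∑ a : m, ∑ j : ρ, U a j ^ 2) * Real.sqrt (∑ a : n, ∑ j : ρ, V a j ^ 2) := by
    rw [← Real.sqrt_mul (x := ∑ a : m, ∑ j : ρ, U a j ^ 2) (Finset.sum_nonneg fun a _ => Finset.sum_nonneg fun j _ => sq_nonneg _)]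
    apply Real.sqrt_le_sqrt
    rw [hgsum]
    apply mul_le_mul_of_nonneg_right hfsum
    exact Finset.sum_nonneg fun a _ => Finset.sum_nonneg fun j _ => sq_nonneg _
  exact le_trans step1 (le_trans step2 step3)


open Matrix in
/-- nuclear norm bound used in the convex relaxation. If
`A_k = ∑_j w_j α_{k,j}ᵀ` with `‖w_j‖₂ ≤ B₁` and `‖α_{k,j}‖₂ ≤ B₂`, then the
horizontal concatenation `A = (A_1, …, A_{d₂})` has rank at most `r` and nuclear
norm at most `B₁ B₂ r √d₂`. -/
theorem ccnn_nuclear_norm_bound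
    (r d1 d2 P : ℕ) (hr : 0 < r) (hd1 : 0 < d1) (hd2 : 0 < d2) (hP : 0 < P)
    (B1 B2 : ℝ) (hB1 : 0 ≤ B1) (hB2 : 0 ≤ B2)
    (w : Fin r → EuclideanSpace ℝ (Fin d1)) (hw : ∀ j, ‖w j‖ ≤ B1)
    (α : Fin d2 → Fin r → EuclideanSpace ℝ (Fin P)) (hα : ∀ k j, ‖α k j‖ ≤ B2)
    (A : Matrix (Fin d1) (Fin d2 × Fin P) ℝ)
    (hA : ∀ i k p, A i (k, p) = ∑ j : Fin r, w j i * α k j p) :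
    A.rank ≤ r ∧ nuclearNorm A ≤ B1 * B2 * r * Real.sqrt d2 := by
  classical
  set U : Matrix (Fin d1) (Fin r) ℝ := fun i j => w j i with hU
  set V : Matrix (Fin d2 × Fin P) (Fin r) ℝ := fun q j => α q.1 j q.2 with hV
  have hfac : A = U * Vᵀ := by
    ext i q
    obtain ⟨k, p⟩ := q
    rw [hA]
    simp [Matrix.mul_apply, hU, hV]
    rfl
  constructor
  · rw [hfac]
    exact (Matrix.rank_mul_le_left U Vᵀ).trans (by simpa using Matrix.rank_le_card_width U)
  · rw [hfac]
    refine (nuclearNorm_factor_le U V).trans ?_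
    have hUsum : ∑ a : Fin d1, ∑ j : Fin r, U a j ^ 2 ≤ (r : ℝ) * B1 ^ 2 := by
      have hsw : ∑ a : Fin d1, ∑ j : Fin r, U a j ^ 2
          = ∑ j : Fin r, ∑ a : Fin d1, (w j a) ^ 2 := Finset.sum_comm
      rw [hsw]
      have hbound : ∀ j : Fin r, ∑ a : Fin d1, (w j a) ^ 2 ≤ B1 ^ 2 := by
        intro j
        have hn : ‖w j‖ ^ 2 = ∑ a, (w j a) ^ 2 := by
          rw [EuclideanSpace.norm_eq, Real.sq_sqrt (by positivity)]
          simp [sq_abs]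
        calc ∑ a : Fin d1, (w j a) ^ 2 = ‖w j‖ ^ 2 := hn.symm
          _ ≤ B1 ^ 2 := pow_le_pow_left₀ (norm_nonneg _) (hw j) 2
      calc ∑ j : Fin r, ∑ a : Fin d1, (w j a) ^ 2 ≤ ∑ _j : Fin r, B1 ^ 2 :=
            Finset.sum_le_sum fun j _ => hbound j
        _ = (r : ℝ) * B1 ^ 2 := by simp [mul_comm]
    have hVsum : ∑ q : Fin d2 × Fin P, ∑ j : Fin r, V q j ^ 2 ≤ (d2 : ℝ) * (r : ℝ) * B2 ^ 2 := by
      have hsw : ∑ q : Fin d2 × Fin P, ∑ j : Fin r, V q j ^ 2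
          = ∑ k : Fin d2, ∑ j : Fin r, ∑ p : Fin P, (α k j p) ^ 2 := by
        rw [Fintype.sum_prod_type]
        exact Finset.sum_congr rfl fun k _ => Finset.sum_comm
      rw [hsw]
      have hbound : ∀ (k : Fin d2) (j : Fin r), ∑ p : Fin P, (α k j p) ^ 2 ≤ B2 ^ 2 := by
        intro k j
        have hn : ‖α k j‖ ^ 2 = ∑ p, (α k j p) ^ 2 := by
          rw [EuclideanSpace.norm_eq, Real.sq_sqrt (by positivity)]
          simp [sq_abs]
        calc ∑ p : Fin P, (α k j p) ^ 2 = ‖α k j‖ ^ 2 := hn.symm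
          _ ≤ B2 ^ 2 := pow_le_pow_left₀ (norm_nonneg _) (hα k j) 2
      calc ∑ k : Fin d2, ∑ j : Fin r, ∑ p : Fin P, (α k j p) ^ 2
          ≤ ∑ _k : Fin d2, ∑ _j : Fin r, B2 ^ 2 :=
            Finset.sum_le_sum fun k _ => Finset.sum_le_sum fun j _ => hbound k j
        _ = (d2 : ℝ) * (r : ℝ) * B2 ^ 2 := by simp [mul_comm, mul_assoc]; ring
    have h1 : Real.sqrt (∑ a : Fin d1, ∑ j : Fin r, U a j ^ 2) ≤ Real.sqrt ((r : ℝ) * B1 ^ 2) :=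
      Real.sqrt_le_sqrt hUsum
    have h2 : Real.sqrt (∑ q : Fin d2 × Fin P, ∑ j : Fin r, V q j ^ 2)
        ≤ Real.sqrt ((d2 : ℝ) * (r : ℝ) * B2 ^ 2) := Real.sqrt_le_sqrt hVsum
    have heq : Real.sqrt ((r : ℝ) * B1 ^ 2) * Real.sqrt ((d2 : ℝ) * (r : ℝ) * B2 ^ 2)
        = B1 * B2 * r * Real.sqrt d2 := by
      have sr : Real.sqrt ((r : ℝ) * B1 ^ 2) = B1 * Real.sqrt r := by
        rw [mul_comm, Real.sqrt_mul (sq_nonneg B1), Real.sqrt_sq hB1]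
      have sv : Real.sqrt ((d2 : ℝ) * (r : ℝ) * B2 ^ 2)
          = B2 * (Real.sqrt d2 * Real.sqrt r) := by
        rw [show (d2 : ℝ) * (r : ℝ) * B2 ^ 2 = B2 ^ 2 * ((d2 : ℝ) * (r : ℝ)) by ring,
          Real.sqrt_mul (sq_nonneg B2), Real.sqrt_sq hB2,
          Real.sqrt_mul (by positivity : (0:ℝ) ≤ (d2 : ℝ))]
      rw [sr, sv]
      have hrr : Real.sqrt r * Real.sqrt r = (r : ℝ) := Real.mul_self_sqrt (by positivity)
      calc B1 * Real.sqrt r * (B2 * (Real.sqrt d2 * Real.sqrt r))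
          = B1 * B2 * (Real.sqrt r * Real.sqrt r) * Real.sqrt d2 := by ring
        _ = B1 * B2 * r * Real.sqrt d2 := by rw [hrr]
    calc Real.sqrt (∑ a : Fin d1, ∑ j : Fin r, U a j ^ 2)
          * Real.sqrt (∑ q : Fin d2 × Fin P, ∑ j : Fin r, V q j ^ 2)
        ≤ Real.sqrt ((r : ℝ) * B1 ^ 2) * Real.sqrt ((d2 : ℝ) * (r : ℝ) * B2 ^ 2) :=
          mul_le_mul h1 h2 (Real.sqrt_nonneg _) (Real.sqrt_nonneg _)
      _ = B1 * B2 * r * Real.sqrt d2 := heq
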